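/- For every ε > 0, Duchi et al.'s one-dimensional mechanism satisfies ε-local differential privacy: for all inputs t, t′ ∈ [−1,1] and each output value x ∈ {−B, B}, the probability of outputting x on input t is at most e^ε times the probability of outputting x on input t′. -/

import Mathlib

open Real

/-- output magnitude `B` of Duchi et al.'s one-dimensional mechanism. -/
noncomputable def duchiB (ε : ℝ) : ℝ := (exp ε + 1) / (exp ε - 1)

/-- output probability mass function of Duchi et al.'s one-dimensional mechanism:
it outputs `B` with probability `((e^ε−1)/(2e^ε+2))·t + 1/2` and `−B` with probability
`−((e^ε−1)/(2e^ε+2))·t + 1/2`. -/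
noncomputable def duchiProb (ε t x : ℝ) : ℝ :=
  if x = duchiB ε then (exp ε - 1) / (2 * exp ε + 2) * t + 1 / 2
  else if x = -duchiB ε then -((exp ε - 1) / (2 * exp ε + 2)) * t + 1 / 2
  else 0

lemma duchi_key (E : ℝ) (hE : 1 < E) (t t' : ℝ)
    (ht : t ≤ 1) (ht' : -1 ≤ t') :
    (E - 1) / (2 * E + 2) * t + 1 / 2 ≤ E * ((E - 1) / (2 * E + 2) * t' + 1 / 2) := by
  set a := (E - 1) / (2 * E + 2) with ha
  have hpos : 0 < 2 * E + 2 := by linarith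
  have ha0 : 0 ≤ a := div_nonneg (by linarith) (by linarith)
  have hkey : a + 1 / 2 = E * (-a + 1 / 2) := by
    rw [ha]
    field_simp
    ring
  have h1 : a * t + 1 / 2 ≤ a + 1 / 2 := by nlinarith
  have hat : -a ≤ a * t' := by nlinarith
  have h2 : E * (-a + 1 / 2) ≤ E * (a * t' + 1 / 2) :=
    mul_le_mul_of_nonneg_left (by linarith) (by linarith)
  linarith

/-- Duchi et al.'s one-dimensional mechanism satisfies ε-local differential privacy. -/
theorem stmt_7 (ε : ℝ) (hε : 0 < ε) (t t' : ℝ)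
    (ht : t ∈ Set.Icc (-1 : ℝ) 1) (ht' : t' ∈ Set.Icc (-1 : ℝ) 1)
    (x : ℝ) (hx : x ∈ ({-duchiB ε, duchiB ε} : Set ℝ)) :
    duchiProb ε t x ≤ exp ε * duchiProb ε t' x := by
  have hE : 1 < exp ε := by
    have := exp_lt_exp.mpr hε
    simpa using this
  have hB : duchiB ε ≠ -duchiB ε := by
    have hBpos : 0 < duchiB ε := div_pos (by linarith) (by linarith)
    intro h; linarith
  obtain ⟨ht1, ht2⟩ := ht
  obtain ⟨ht'1, ht'2⟩ := ht'
  have hB' : ¬ (-duchiB ε = duchiB ε) := fun h => hB h.symm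
  rcases hx with hx | hx
  · subst hx
    simp only [duchiProb, if_neg hB', if_true]
    have := duchi_key (exp ε) hE (-t) (-t') (by linarith) (by linarith)
    nlinarith [this]
  · subst hx
    simp only [duchiProb, if_pos rfl]
    exact duchi_key (exp ε) hE t t' ht2 ht'1
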